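/- Let S be a commutative antiring, D = Diag(d₁,...,dₙ) an invertible diagonal matrix over S, and {a_σ}_{σ∈Sₙ} pairwise orthogonal idempotents summing to 1. Then the matrix A = D·Σ_σ a_σ P_σ is invertible, with inverse B = Σ_σ a_σ·Diag(d_{σ⁻¹(1)}⁻¹,...,d_{σ⁻¹(n)}⁻¹)·P_σᵀ. -/

import Mathlib

open Matrix

theorem key1_aux {S : Type*} [CommSemiring S] {n : ℕ} (d dinv : Fin n → S)
    (hd : ∀ i, d i * dinv i = 1) (σ : Equiv.Perm (Fin n)) :
    (Matrix.diagonal d * Equiv.Perm.permMatrix S σ) *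
      (Matrix.diagonal (fun i => dinv (σ⁻¹ i)) * (Equiv.Perm.permMatrix S σ)ᵀ) = 1 := by
  ext i j
  simp [Matrix.mul_apply, Matrix.diagonal_apply, Equiv.Perm.permMatrix, PEquiv.toMatrix_apply,
    Equiv.toPEquiv_apply, Matrix.transpose_apply, Matrix.one_apply, Finset.mul_sum, ite_and,
    mul_ite, ite_mul, Finset.sum_ite_eq, Finset.sum_ite_eq']
  rcases eq_or_ne i j with rfl | h
  · simp [hd, Equiv.apply_eq_iff_eq_symm_apply, Equiv.symm_apply_eq]
  · simp [h, Equiv.apply_eq_iff_eq_symm_apply, Equiv.symm_apply_eq]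

theorem key2_aux {S : Type*} [CommSemiring S] {n : ℕ} (d dinv : Fin n → S)
    (hd : ∀ i, d i * dinv i = 1) (σ : Equiv.Perm (Fin n)) :
    (Matrix.diagonal (fun i => dinv (σ⁻¹ i)) * (Equiv.Perm.permMatrix S σ)ᵀ) *
      (Matrix.diagonal d * Equiv.Perm.permMatrix S σ) = 1 := by
  ext i j
  simp only [Matrix.mul_apply, Matrix.diagonal_apply, Equiv.Perm.permMatrix,
    PEquiv.toMatrix_apply, Equiv.toPEquiv_apply, Matrix.transpose_apply, Matrix.one_apply,
    Option.mem_def, Option.some.injEq, mul_ite, ite_mul, mul_zero, zero_mul, mul_one, one_mul,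
    Finset.sum_ite_eq, Finset.sum_ite_eq', Finset.mem_univ, if_true, ite_and]
  simp_rw [show ∀ (k : Fin n) (x1 : Fin n), (σ x1 = k) = (x1 = σ⁻¹ k) from
    fun k x1 => propext ⟨fun h => by simp [← h], fun h => by simp [h]⟩,
    show ∀ (k : Fin n) (x1 : Fin n), (k = σ x1) = (x1 = σ⁻¹ k) from
    fun k x1 => propext ⟨fun h => by simp [h], fun h => by simp [h]⟩]
  simp only [Finset.sum_ite_eq', Finset.mem_univ, if_true]
  rcases eq_or_ne i j with rfl | h
  · simp [mul_comm, hd]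
  · simp [h, show ¬ (σ⁻¹ i = σ⁻¹ j) from fun hc => h (σ⁻¹.injective hc)]

theorem keysum_aux {S : Type*} [CommSemiring S] {n : ℕ}
    (a : Equiv.Perm (Fin n) → S)
    (horth : ∀ σ τ, σ ≠ τ → a σ * a τ = 0)
    (hidem : ∀ σ, a σ * a σ = a σ)
    (hsum : ∑ σ, a σ = 1)
    (M N : Equiv.Perm (Fin n) → Matrix (Fin n) (Fin n) S)
    (hMN : ∀ σ, M σ * N σ = 1) :
    (∑ σ, a σ • M σ) * (∑ σ, a σ • N σ) = 1 := by
  rw [Finset.sum_mul_sum]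
  have : ∀ σ ∈ Finset.univ, ∑ τ : Equiv.Perm (Fin n), (a σ • M σ) * (a τ • N τ)
      = a σ • (1 : Matrix (Fin n) (Fin n) S) := by
    intro σ _
    rw [Finset.sum_eq_single σ]
    · rw [smul_mul_smul_comm, hidem, hMN]
    · intro τ _ hτ
      rw [smul_mul_smul_comm, horth σ τ (Ne.symm hτ), zero_smul]
    · simp
  rw [Finset.sum_congr rfl this, ← Finset.sum_smul, hsum, one_smul]

/-- If `D = diagonal d` is invertible and `(a_σ)` are pairwise orthogonal idempotents summing
to 1, then `A = D * Σ_σ a_σ P_σ` is invertible with explicit inverse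
`B = Σ_σ a_σ • (Diag(d_{σ⁻¹(i)}⁻¹) * P_σᵀ)`. -/
theorem stmt_9 {S : Type*} [CommSemiring S]
    (hzs : ∀ a b : S, a + b = 0 → a = 0 ∧ b = 0)
    (n : ℕ) (d dinv : Fin n → S) (hd : ∀ i, d i * dinv i = 1)
    (a : Equiv.Perm (Fin n) → S)
    (horth : ∀ σ τ, σ ≠ τ → a σ * a τ = 0)
    (hidem : ∀ σ, a σ * a σ = a σ)
    (hsum : ∑ σ, a σ = 1) :
    (Matrix.diagonal d * ∑ σ, a σ • Equiv.Perm.permMatrix S σ) *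
      (∑ σ, a σ • (Matrix.diagonal (fun i => dinv (σ⁻¹ i)) * (Equiv.Perm.permMatrix S σ)ᵀ)) = 1 ∧
    (∑ σ, a σ • (Matrix.diagonal (fun i => dinv (σ⁻¹ i)) * (Equiv.Perm.permMatrix S σ)ᵀ)) *
      (Matrix.diagonal d * ∑ σ, a σ • Equiv.Perm.permMatrix S σ) = 1 := by
  have hA : Matrix.diagonal d * ∑ σ, a σ • Equiv.Perm.permMatrix S σ
      = ∑ σ, a σ • (Matrix.diagonal d * Equiv.Perm.permMatrix S σ) := by
    rw [Finset.mul_sum]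
    exact Finset.sum_congr rfl fun σ _ => Matrix.mul_smul _ _ _
  rw [hA]
  exact ⟨keysum_aux a horth hidem hsum _ _ (key1_aux d dinv hd),
    keysum_aux a horth hidem hsum _ _ (key2_aux d dinv hd)⟩
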